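/- Supermartingale lemma (van de Geer): under the martingale setup with predictable bounds, for every λ ∈ ℝ the process j ↦ exp( λ·M_j − (λ²/8)·U_j² ), j = 0,1,…,k, is a supermartingale with respect to the filtration (ℱ_j). -/

import Mathlib

open MeasureTheory Real

lemma hoeffding_core {p : ℝ} (hp0 : 0 ≤ p) (hp1 : p ≤ 1) (h : ℝ) :
    Real.log (1 - p + p * Real.exp h) ≤ p * h + h ^ 2 / 8 := by
  have hs : ∀ x : ℝ, 0 < 1 - p + p * Real.exp x := by
    intro x
    rcases eq_or_lt_of_le hp0 with he | hl
    · simp [← he]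
    · have := Real.exp_pos x
      nlinarith
  set g : ℝ → ℝ := fun x => p * x + x ^ 2 / 8 - Real.log (1 - p + p * Real.exp x) with hg
  set g' : ℝ → ℝ := fun x => p + x / 4 - p * Real.exp x / (1 - p + p * Real.exp x) with hg'
  have hd : ∀ x, HasDerivAt g (g' x) x := by
    intro x
    have h1 : HasDerivAt (fun x : ℝ => 1 - p + p * Real.exp x) (p * Real.exp x) x := by
      simpa using (((Real.hasDerivAt_exp x).const_mul p).const_add (1 - p))
    have h2 : HasDerivAt (fun x : ℝ => Real.log (1 - p + p * Real.exp x))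
        (p * Real.exp x / (1 - p + p * Real.exp x)) x := h1.log (hs x).ne'
    have h3 : HasDerivAt (fun x : ℝ => p * x + x ^ 2 / 8) (p + 2 * x / 8) x := by
      have := ((hasDerivAt_pow 2 x).div_const 8).const_add 0
      exact (((hasDerivAt_id x).const_mul p).add ((hasDerivAt_pow 2 x).div_const 8)).congr_deriv
        (by norm_num)
    have := h3.sub h2
    refine this.congr_deriv ?_
    simp only [hg']
    ring
  have hd' : ∀ x, HasDerivAt g' (1/4 - p * (1 - p) * Real.exp x / (1 - p + p * Real.exp x) ^ 2)
      x := by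
    intro x
    have h1 : HasDerivAt (fun x : ℝ => 1 - p + p * Real.exp x) (p * Real.exp x) x := by
      simpa using (((Real.hasDerivAt_exp x).const_mul p).const_add (1 - p))
    have h2 : HasDerivAt (fun x : ℝ => p * Real.exp x) (p * Real.exp x) x :=
      (Real.hasDerivAt_exp x).const_mul p
    have h3 := h2.div h1 (hs x).ne'
    have h4 : HasDerivAt (fun x : ℝ => p + x / 4) (1/4) x := by
      simpa using ((hasDerivAt_id x).div_const 4).const_add p
    have := h4.sub h3
    refine this.congr_deriv ?_
    ring
  have hdiff : Differentiable ℝ g' := fun x => (hd' x).differentiableAt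
  have hderiv : ∀ x, deriv g' x = 1/4 - p * (1 - p) * Real.exp x / (1 - p + p * Real.exp x) ^ 2 :=
    fun x => (hd' x).deriv
  have hmono : Monotone g' := by
    refine monotone_of_deriv_nonneg hdiff fun x => ?_
    rw [hderiv x]
    have h1 := hs x
    have h2 := Real.exp_pos x
    have key : 4 * (p * (1 - p) * Real.exp x) ≤ (1 - p + p * Real.exp x) ^ 2 := by
      nlinarith [sq_nonneg ((1 - p) - p * Real.exp x)]
    rw [sub_nonneg, div_le_iff₀ (by positivity)]
    nlinarith
  have hg'0 : g' 0 = 0 := by simp [hg']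
  have hg0 : g 0 = 0 := by simp [hg]
  have hgnonneg : ∀ x, 0 ≤ g x := by
    intro x
    have hdg : ∀ y, deriv g y = g' y := fun y => (hd y).deriv
    have hcont : Continuous g := by
      have : Differentiable ℝ g := fun y => (hd y).differentiableAt
      exact this.continuous
    rcases le_or_gt 0 x with hx | hx
    · have hm : MonotoneOn g (Set.Ici 0) := by
        refine monotoneOn_of_deriv_nonneg (convex_Ici 0)
          hcont.continuousOn ?_ ?_
        · exact fun y _ => (hd y).differentiableAt.differentiableWithinAt
        · intro y hy
          rw [hdg y, ← hg'0]
          exact hmono (le_of_lt (by simpa using hy))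
      have := hm (Set.self_mem_Ici) (Set.mem_Ici.2 hx) hx
      rwa [hg0] at this
    · have hm : AntitoneOn g (Set.Iic 0) := by
        refine antitoneOn_of_deriv_nonpos (convex_Iic 0)
          hcont.continuousOn ?_ ?_
        · exact fun y _ => (hd y).differentiableAt.differentiableWithinAt
        · intro y hy
          rw [hdg y, ← hg'0]
          exact hmono (le_of_lt (by simpa using hy))
      have := hm (Set.mem_Iic.2 hx.le) (Set.self_mem_Iic) hx.le
      rwa [hg0] at this
  have := hgnonneg h
  simp only [hg] at this
  linarith

-- convexity bound
lemma exp_le_interp {c d x t : ℝ} (hcx : c ≤ x) (hxd : x ≤ d) (hcd : c < d) :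
    Real.exp (t * x) ≤ ((d - x) * Real.exp (t * c) + (x - c) * Real.exp (t * d)) / (d - c) := by
  have hdc : (0:ℝ) < d - c := by linarith
  have key := convexOn_exp.2 (Set.mem_univ (t * c)) (Set.mem_univ (t * d))
    (show (0:ℝ) ≤ (d - x) / (d - c) from div_nonneg (by linarith) hdc.le)
    (show (0:ℝ) ≤ (x - c) / (d - c) from div_nonneg (by linarith) hdc.le)
    (show (d - x) / (d - c) + (x - c) / (d - c) = 1 by field_simp; ring)
  simp only [smul_eq_mul] at key
  have harg : (d - x) / (d - c) * (t * c) + (x - c) / (d - c) * (t * d) = t * x := by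
    field_simp
    ring
  rw [harg] at key
  calc Real.exp (t * x) ≤ (d - x) / (d - c) * Real.exp (t * c)
        + (x - c) / (d - c) * Real.exp (t * d) := key
    _ = ((d - x) * Real.exp (t * c) + (x - c) * Real.exp (t * d)) / (d - c) := by
        field_simp

-- deterministic Hoeffding
lemma hoeffding_det {c d t : ℝ} (hc : c ≤ 0) (hd : 0 ≤ d) (hcd : c < d) :
    (d * Real.exp (t * c) - c * Real.exp (t * d)) / (d - c)
      ≤ Real.exp (t ^ 2 * (d - c) ^ 2 / 8) := by
  have hdc : (0:ℝ) < d - c := by linarith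
  set p : ℝ := -c / (d - c) with hp
  have hp0 : 0 ≤ p := div_nonneg (by linarith) hdc.le
  have hp1 : p ≤ 1 := by rw [hp, div_le_one hdc]; linarith
  set h : ℝ := t * (d - c) with hh
  have htc : t * c = -(p * h) := by rw [hp, hh]; field_simp
  have htd : t * d = (1 - p) * h := by rw [hp, hh]; field_simp; ring
  have key := hoeffding_core hp0 hp1 h
  -- LHS = exp(-p h) * (1 - p + p * exp h)
  have hs : 0 < 1 - p + p * Real.exp h := by
    rcases eq_or_lt_of_le hp0 with he | hl
    · simp [← he]
    · nlinarith [Real.exp_pos h]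
  have hlhs : (d * Real.exp (t * c) - c * Real.exp (t * d)) / (d - c)
      = Real.exp (-(p * h)) * (1 - p + p * Real.exp h) := by
    have step1 : (d * Real.exp (t * c) - c * Real.exp (t * d)) / (d - c)
        = (1 - p) * Real.exp (t * c) + p * Real.exp (t * d) := by
      rw [hp]; field_simp; ring
    rw [step1, htc, htd, show (1 - p) * h = -(p * h) + h by ring, Real.exp_add]
    ring
  rw [hlhs]
  have hrhs : t ^ 2 * (d - c) ^ 2 / 8 = h ^ 2 / 8 := by rw [hh]; ring
  rw [hrhs]
  calc Real.exp (-(p * h)) * (1 - p + p * Real.exp h)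
      = Real.exp (-(p * h) + Real.log (1 - p + p * Real.exp h)) := by
        rw [Real.exp_add, Real.exp_log hs]
    _ ≤ Real.exp (-(p * h) + (p * h + h ^ 2 / 8)) := by
        exact Real.exp_le_exp.2 (by linarith)
    _ = Real.exp (h ^ 2 / 8) := by ring_nf

-- boundedness
lemma exp_arg_le_two {c d x t : ℝ} (hcx : c ≤ x) (hxd : x ≤ d) (hc : c ≤ 0) (hd : 0 ≤ d) :
    t * x - t ^ 2 / 8 * (d - c) ^ 2 ≤ 2 := by
  have h1 : t * x ≤ |t| * (d - c) := by
    have : |x| ≤ d - c := abs_le.2 ⟨by linarith, by linarith⟩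
    calc t * x ≤ |t * x| := le_abs_self _
      _ = |t| * |x| := abs_mul t x
      _ ≤ |t| * (d - c) := by nlinarith [abs_nonneg t]
  nlinarith [sq_nonneg (|t| * (d - c) - 4), sq_abs t, abs_nonneg t]

-- D bounding X from above with E[X|m'] = 0 forces D ≥ 0 a.e.
lemma ae_upper_nonneg {Ω : Type*} {m' : MeasurableSpace Ω} {m : MeasurableSpace Ω}
    (hm : m' ≤ m) (μ : Measure Ω) [IsFiniteMeasure μ] {X D : Ω → ℝ}
    (hXint : Integrable X μ) (hcond : μ[X|m'] =ᵐ[μ] 0)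
    (hD : StronglyMeasurable[m'] D) (hXD : ∀ᵐ ω ∂μ, X ω ≤ D ω) :
    ∀ᵐ ω ∂μ, 0 ≤ D ω := by
  set A : Set Ω := {ω | D ω < 0} with hA
  have hAm' : MeasurableSet[m'] A := measurableSet_lt hD.measurable measurable_const
  have hAm : MeasurableSet A := hm _ hAm'
  have hint0 : ∫ ω in A, X ω ∂μ = 0 := by
    rw [← setIntegral_condExp hm hXint hAm']
    rw [integral_congr_ae (ae_restrict_of_ae hcond)]
    simp
  have hXneg : ∀ᵐ ω ∂μ.restrict A, X ω < 0 := by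
    filter_upwards [ae_restrict_of_ae hXD, ae_restrict_mem hAm] with ω h1 h2
    exact lt_of_le_of_lt h1 h2
  have hzero : (fun ω => -X ω) =ᵐ[μ.restrict A] 0 := by
    refine (integral_eq_zero_iff_of_nonneg_ae ?_ ?_).1 ?_
    · filter_upwards [hXneg] with ω h using by simpa using h.le
    · exact (hXint.restrict).neg
    · rw [integral_neg, hint0, neg_zero]
  have hFalse : ∀ᵐ ω ∂μ.restrict A, False := by
    filter_upwards [hzero, hXneg] with ω h1 h2
    simp only [Pi.zero_apply] at h1
    linarith
  have hA0 : μ A = 0 := by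
    have := ae_iff.mp hFalse
    simpa [Measure.restrict_apply_univ] using this
  rw [ae_iff]
  convert hA0 using 2
  ext ω
  simp [hA, not_le]

lemma condexp_step {Ω : Type*} {m' : MeasurableSpace Ω} {m : MeasurableSpace Ω}
    (hm : m' ≤ m) (μ : Measure Ω) [IsProbabilityMeasure μ] {X C D : Ω → ℝ}
    (hXint : Integrable X μ)
    (hCm : StronglyMeasurable[m'] C) (hDm : StronglyMeasurable[m'] D)
    (hcond : μ[X|m'] =ᵐ[μ] 0)
    (hae : ∀ᵐ ω ∂μ, (C ω ≤ X ω ∧ X ω ≤ D ω) ∧ C ω < D ω ∧ C ω ≤ 0 ∧ 0 ≤ D ω)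
    (l : ℝ) :
    μ[fun ω => Real.exp (l * X ω - l ^ 2 / 8 * (D ω - C ω) ^ 2)|m'] ≤ᵐ[μ]
      fun _ => (1 : ℝ) := by
  set Z : Ω → ℝ := fun ω => Real.exp (l * X ω - l ^ 2 / 8 * (D ω - C ω) ^ 2) with hZ
  set q : Ω → ℝ := fun ω => Real.exp (-(l ^ 2 / 8 * (D ω - C ω) ^ 2)) with hq
  set A : Ω → ℝ := fun ω =>
    (D ω * Real.exp (l * C ω) - C ω * Real.exp (l * D ω)) / (D ω - C ω) * q ω with hA
  set B : Ω → ℝ := fun ω =>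
    (Real.exp (l * D ω) - Real.exp (l * C ω)) / (D ω - C ω) * q ω with hB
  -- pointwise facts on the good event
  have hZle : ∀ᵐ ω ∂μ, Z ω ≤ A ω + B ω * X ω := by
    filter_upwards [hae] with ω ⟨⟨h1, h2⟩, h3, h4, h5⟩
    have := exp_le_interp (t := l) h1 h2 h3
    have hq0 : 0 < q ω := Real.exp_pos _
    have hZeq : Z ω = Real.exp (l * X ω) * q ω := by
      rw [hZ, hq]; simp [← Real.exp_add]; ring_nf
    have hAB : A ω + B ω * X ω
        = ((D ω - X ω) * Real.exp (l * C ω) + (X ω - C ω) * Real.exp (l * D ω)) / (D ω - C ω)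
          * q ω := by
      rw [hA, hB]; field_simp; ring
    rw [hZeq, hAB]
    exact mul_le_mul_of_nonneg_right this hq0.le
  have hA01 : ∀ᵐ ω ∂μ, 0 ≤ A ω ∧ A ω ≤ 1 := by
    filter_upwards [hae] with ω ⟨⟨h1, h2⟩, h3, h4, h5⟩
    constructor
    · have hdc : (0:ℝ) < D ω - C ω := by linarith
      have : 0 ≤ D ω * Real.exp (l * C ω) - C ω * Real.exp (l * D ω) := by
        nlinarith [Real.exp_pos (l * C ω), Real.exp_pos (l * D ω)]
      rw [hA]
      positivity
    · have := hoeffding_det (t := l) h4 h5 h3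
      rw [hA, hq]
      calc (D ω * Real.exp (l * C ω) - C ω * Real.exp (l * D ω)) / (D ω - C ω)
            * Real.exp (-(l ^ 2 / 8 * (D ω - C ω) ^ 2))
          ≤ Real.exp (l ^ 2 * (D ω - C ω) ^ 2 / 8)
            * Real.exp (-(l ^ 2 / 8 * (D ω - C ω) ^ 2)) :=
            mul_le_mul_of_nonneg_right this (Real.exp_pos _).le
        _ = 1 := by rw [← Real.exp_add]; ring_nf; exact Real.exp_zero
  have hABX : ∀ᵐ ω ∂μ, 0 ≤ A ω + B ω * X ω ∧ A ω + B ω * X ω ≤ Real.exp 2 := by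
    filter_upwards [hae] with ω ⟨⟨h1, h2⟩, h3, h4, h5⟩
    have hdc : (0:ℝ) < D ω - C ω := by linarith
    have hAB : A ω + B ω * X ω
        = ((D ω - X ω) * Real.exp (l * C ω) + (X ω - C ω) * Real.exp (l * D ω)) / (D ω - C ω)
          * q ω := by
      rw [hA, hB]; field_simp; ring
    rw [hAB]
    constructor
    · have h6 : (0:ℝ) ≤ (D ω - X ω) * Real.exp (l * C ω) + (X ω - C ω) * Real.exp (l * D ω) := by
        nlinarith [Real.exp_pos (l * C ω), Real.exp_pos (l * D ω)]
      have := (Real.exp_pos (-(l ^ 2 / 8 * (D ω - C ω) ^ 2))).le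
      rw [hq]
      positivity
    · have hc2 : Real.exp (l * C ω) * q ω ≤ Real.exp 2 := by
        rw [hq, ← Real.exp_add]
        exact Real.exp_le_exp.2 (by
          have := exp_arg_le_two (x := C ω) (t := l) le_rfl h3.le h4 h5
          linarith)
      have hd2 : Real.exp (l * D ω) * q ω ≤ Real.exp 2 := by
        rw [hq, ← Real.exp_add]
        exact Real.exp_le_exp.2 (by
          have := exp_arg_le_two (x := D ω) (t := l) h3.le le_rfl h4 h5
          linarith)
      have hq0 : 0 < q ω := Real.exp_pos _
      have e1 : (0:ℝ) < Real.exp (l * C ω) := Real.exp_pos _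
      have e2 : (0:ℝ) < Real.exp (l * D ω) := Real.exp_pos _
      rw [div_mul_eq_mul_div, div_le_iff₀ hdc]
      calc ((D ω - X ω) * Real.exp (l * C ω) + (X ω - C ω) * Real.exp (l * D ω)) * q ω
          = (D ω - X ω) * (Real.exp (l * C ω) * q ω)
            + (X ω - C ω) * (Real.exp (l * D ω) * q ω) := by ring
        _ ≤ (D ω - X ω) * Real.exp 2 + (X ω - C ω) * Real.exp 2 := by
            have n1 : (0:ℝ) ≤ D ω - X ω := by linarith
            have n2 : (0:ℝ) ≤ X ω - C ω := by linarith
            gcongr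
        _ = Real.exp 2 * (D ω - C ω) := by ring
  -- measurability
  have hCme : Measurable[m'] C := hCm.measurable
  have hDme : Measurable[m'] D := hDm.measurable
  have hqm : Measurable[m'] q := by
    apply Measurable.exp
    exact (((hDme.sub hCme).pow measurable_const).const_mul (l ^ 2 / 8)).neg
  have hAm : StronglyMeasurable[m'] A := by
    apply Measurable.stronglyMeasurable
    exact (((hDme.mul (hCme.const_mul l).exp).sub
      (hCme.mul (hDme.const_mul l).exp)).div (hDme.sub hCme)).mul hqm
  have hBm : StronglyMeasurable[m'] B := by
    apply Measurable.stronglyMeasurable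
    exact (((hDme.const_mul l).exp.sub (hCme.const_mul l).exp).div (hDme.sub hCme)).mul hqm
  have hXm : AEStronglyMeasurable X μ := hXint.aestronglyMeasurable
  -- integrability
  have hAint : Integrable A μ := by
    refine Integrable.mono' (integrable_const (1:ℝ)) ((hAm.mono hm).aestronglyMeasurable) ?_
    filter_upwards [hA01] with ω ⟨h0, h1⟩
    rwa [Real.norm_eq_abs, abs_of_nonneg h0]
  have hABXint : Integrable (fun ω => A ω + B ω * X ω) μ := by
    refine Integrable.mono' (integrable_const (Real.exp 2))
      (((hAm.mono hm).aestronglyMeasurable).add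
        (((hBm.mono hm).aestronglyMeasurable).mul hXm)) ?_
    filter_upwards [hABX] with ω ⟨h0, h1⟩
    rwa [Real.norm_eq_abs, abs_of_nonneg h0]
  have hBXint : Integrable (fun ω => B ω * X ω) μ := by
    exact (hABXint.sub hAint).congr (Filter.Eventually.of_forall fun ω => by simp)
  have hZint : Integrable Z μ := by
    refine Integrable.mono' (integrable_const (Real.exp 2)) ?_ ?_
    · refine (Real.continuous_exp.comp_aestronglyMeasurable ?_)
      exact ((aestronglyMeasurable_const.mul hXm)).sub
        ((((hDm.sub hCm).pow 2).const_mul (l ^ 2 / 8)).mono hm).aestronglyMeasurable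
    · filter_upwards [hae] with ω ⟨⟨h1, h2⟩, h3, h4, h5⟩
      rw [Real.norm_eq_abs, abs_of_pos (Real.exp_pos _)]
      exact Real.exp_le_exp.2 (exp_arg_le_two h1 h2 h4 h5)
  -- conditional expectation chain
  calc μ[Z|m'] ≤ᵐ[μ] μ[fun ω => A ω + B ω * X ω|m'] := condExp_mono hZint hABXint hZle
    _ =ᵐ[μ] μ[A|m'] + μ[fun ω => B ω * X ω|m'] := condExp_add hAint hBXint m'
    _ =ᵐ[μ] A + μ[fun ω => B ω * X ω|m'] := by
        rw [condExp_of_stronglyMeasurable hm hAm hAint]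
    _ =ᵐ[μ] A + B * μ[X|m'] := by
        exact Filter.EventuallyEq.add (Filter.EventuallyEq.refl _ _)
          (condExp_mul_of_stronglyMeasurable_left hBm hBXint hXint)
    _ =ᵐ[μ] A + B * 0 := by
        filter_upwards [hcond] with ω h
        simp only [Pi.add_apply, Pi.mul_apply, Pi.zero_apply] at *
        rw [h]
    _ ≤ᵐ[μ] fun _ => (1:ℝ) := by
        filter_upwards [hA01] with ω ⟨h0, h1⟩
        simp only [Pi.add_apply, Pi.mul_apply, Pi.zero_apply, mul_zero, add_zero]
        exact h1

theorem vandegeer_exponential_supermartingale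
    {Ω : Type*} {m : MeasurableSpace Ω} (μ : Measure Ω) [IsProbabilityMeasure μ]
    (k : ℕ) (ℱ : Filtration ℕ m) (X C D : ℕ → Ω → ℝ)
    (hXint : ∀ i, 1 ≤ i → i ≤ k → Integrable (X i) μ)
    (hXmeas : ∀ i, 1 ≤ i → i ≤ k → StronglyMeasurable[ℱ i] (X i))
    (hcond : ∀ i, 1 ≤ i → i ≤ k → μ[X i|ℱ (i - 1)] =ᵐ[μ] 0)
    (hCmeas : ∀ i, 1 ≤ i → i ≤ k → StronglyMeasurable[ℱ (i - 1)] (C i))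
    (hDmeas : ∀ i, 1 ≤ i → i ≤ k → StronglyMeasurable[ℱ (i - 1)] (D i))
    (hCltD : ∀ i, 1 ≤ i → i ≤ k → ∀ᵐ ω ∂μ, C i ω < D i ω)
    (hbounds : ∀ i, 1 ≤ i → i ≤ k → ∀ᵐ ω ∂μ, C i ω ≤ X i ω ∧ X i ω ≤ D i ω)
    (l : ℝ) :
    Supermartingale
      (fun j ω => Real.exp (l * (∑ i ∈ Finset.Icc 1 (min j k), X i ω) -
        l ^ 2 / 8 * ∑ i ∈ Finset.Icc 1 (min j k), (D i ω - C i ω) ^ 2)) ℱ μ := by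
  set Y : ℕ → Ω → ℝ := fun j ω => Real.exp (l * (∑ i ∈ Finset.Icc 1 (min j k), X i ω) -
        l ^ 2 / 8 * ∑ i ∈ Finset.Icc 1 (min j k), (D i ω - C i ω) ^ 2) with hY
  -- the global a.e. good event
  have hae : ∀ᵐ ω ∂μ, ∀ i ∈ Finset.Icc 1 k,
      (C i ω ≤ X i ω ∧ X i ω ≤ D i ω) ∧ C i ω < D i ω ∧ C i ω ≤ 0 ∧ 0 ≤ D i ω := by
    rw [Filter.eventually_all_finset]
    intro i hi
    rw [Finset.mem_Icc] at hi
    obtain ⟨hi1, hik⟩ := hi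
    have hD0 : ∀ᵐ ω ∂μ, 0 ≤ D i ω := by
      refine ae_upper_nonneg (ℱ.le (i - 1)) μ (hXint i hi1 hik) (hcond i hi1 hik)
        (hDmeas i hi1 hik) ?_
      filter_upwards [hbounds i hi1 hik] with ω h using h.2
    have hC0 : ∀ᵐ ω ∂μ, C i ω ≤ 0 := by
      have hneg : μ[-X i|ℱ (i - 1)] =ᵐ[μ] 0 := by
        refine (condExp_neg (X i) (ℱ (i - 1))).trans ?_
        filter_upwards [hcond i hi1 hik] with ω h
        simp only [Pi.neg_apply, Pi.zero_apply] at *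
        rw [h, neg_zero]
      have := ae_upper_nonneg (ℱ.le (i - 1)) μ (hXint i hi1 hik).neg hneg
        (hCmeas i hi1 hik).neg (D := fun ω => -C i ω) ?_
      · filter_upwards [this] with ω h using by linarith
      · filter_upwards [hbounds i hi1 hik] with ω h
        simpa using h.1
    filter_upwards [hbounds i hi1 hik, hCltD i hi1 hik, hC0, hD0] with ω h1 h2 h3 h4
    exact ⟨h1, h2, h3, h4⟩
  -- adapted
  have hadp : ∀ j, StronglyMeasurable[ℱ j] (Y j) := by
    intro j
    apply Measurable.stronglyMeasurable
    have hS : Measurable[ℱ j] (fun ω => ∑ i ∈ Finset.Icc 1 (min j k), X i ω) := by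
      apply Finset.measurable_sum
      intro i hi
      rw [Finset.mem_Icc] at hi
      exact ((hXmeas i hi.1 (le_trans hi.2 (min_le_right j k))).measurable).mono
        (ℱ.mono (le_trans hi.2 (min_le_left j k))) le_rfl
    have hV : Measurable[ℱ j] (fun ω => ∑ i ∈ Finset.Icc 1 (min j k), (D i ω - C i ω) ^ 2) := by
      apply Finset.measurable_sum
      intro i hi
      rw [Finset.mem_Icc] at hi
      have h1 : i - 1 ≤ j := le_trans (Nat.sub_le i 1) (le_trans hi.2 (min_le_left j k))
      have hDc := ((hDmeas i hi.1 (le_trans hi.2 (min_le_right j k))).measurable).mono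
        (ℱ.mono h1) le_rfl
      have hCc := ((hCmeas i hi.1 (le_trans hi.2 (min_le_right j k))).measurable).mono
        (ℱ.mono h1) le_rfl
      exact (hDc.sub hCc).pow measurable_const
    exact ((hS.const_mul l).sub (hV.const_mul (l ^ 2 / 8))).exp
  -- integrability
  have hYbd : ∀ j, ∀ᵐ ω ∂μ, Y j ω ≤ Real.exp (2 * k) := by
    intro j
    filter_upwards [hae] with ω h
    rw [hY]
    apply Real.exp_le_exp.2
    have hsplit : l * (∑ i ∈ Finset.Icc 1 (min j k), X i ω) -
        l ^ 2 / 8 * ∑ i ∈ Finset.Icc 1 (min j k), (D i ω - C i ω) ^ 2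
        = ∑ i ∈ Finset.Icc 1 (min j k),
          (l * X i ω - l ^ 2 / 8 * (D i ω - C i ω) ^ 2) := by
      rw [Finset.mul_sum, Finset.mul_sum, ← Finset.sum_sub_distrib]
    rw [hsplit]
    calc ∑ i ∈ Finset.Icc 1 (min j k), (l * X i ω - l ^ 2 / 8 * (D i ω - C i ω) ^ 2)
        ≤ ∑ _i ∈ Finset.Icc 1 (min j k), (2:ℝ) := by
          apply Finset.sum_le_sum
          intro i hi
          rw [Finset.mem_Icc] at hi
          have hik : i ≤ k := le_trans hi.2 (min_le_right j k)
          obtain ⟨⟨hb1, hb2⟩, _, hc0, hd0⟩ := h i (Finset.mem_Icc.2 ⟨hi.1, hik⟩)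
          exact exp_arg_le_two hb1 hb2 hc0 hd0
      _ = (Finset.Icc 1 (min j k)).card * 2 := by rw [Finset.sum_const]; ring
      _ ≤ 2 * k := by
          rw [Nat.card_Icc]
          have : min j k + 1 - 1 ≤ k := by omega
          have h2 : ((min j k + 1 - 1 : ℕ) : ℝ) ≤ (k : ℝ) := Nat.cast_le.2 this
          nlinarith
  have hint : ∀ j, Integrable (Y j) μ := by
    intro j
    refine Integrable.mono' (integrable_const (Real.exp (2 * k)))
      (((hadp j).mono (ℱ.le j)).aestronglyMeasurable) ?_
    filter_upwards [hYbd j] with ω hω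
    rwa [Real.norm_eq_abs, abs_of_pos (Real.exp_pos _)]
  refine supermartingale_nat hadp hint ?_
  intro j
  rcases le_or_gt k j with hkj | hjk
  · -- frozen regime
    have hfun : Y (j + 1) = Y j := by
      funext ω
      rw [hY]
      simp only [min_eq_right (le_trans hkj (Nat.le_succ j)), min_eq_right hkj]
    rw [hfun, condExp_of_stronglyMeasurable (ℱ.le j) (hadp j) (hint j)]
  · -- active regime: j + 1 ≤ k
    have hj1k : j + 1 ≤ k := hjk
    set Z : Ω → ℝ := fun ω =>
      Real.exp (l * X (j + 1) ω - l ^ 2 / 8 * (D (j + 1) ω - C (j + 1) ω) ^ 2) with hZdef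
    have hi1 : 1 ≤ j + 1 := Nat.succ_le_succ (Nat.zero_le j)
    have haei : ∀ᵐ ω ∂μ, (C (j+1) ω ≤ X (j+1) ω ∧ X (j+1) ω ≤ D (j+1) ω) ∧
        C (j+1) ω < D (j+1) ω ∧ C (j+1) ω ≤ 0 ∧ 0 ≤ D (j+1) ω := by
      filter_upwards [hae] with ω h using h (j+1) (Finset.mem_Icc.2 ⟨hi1, hj1k⟩)
    have hfun : Y (j + 1) = fun ω => Y j ω * Z ω := by
      funext ω
      rw [hY, hZdef]
      simp only [min_eq_left hj1k, min_eq_left hjk.le]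
      rw [Finset.sum_Icc_succ_top hi1 (fun i => X i ω),
        Finset.sum_Icc_succ_top hi1 (fun i => (D i ω - C i ω) ^ 2), ← Real.exp_add]
      congr 1
      ring
    have hZm' : StronglyMeasurable[ℱ j] (C (j+1)) := hCmeas (j+1) hi1 hj1k
    have hDm' : StronglyMeasurable[ℱ j] (D (j+1)) := hDmeas (j+1) hi1 hj1k
    have hcond' : μ[X (j+1)|ℱ j] =ᵐ[μ] 0 := hcond (j+1) hi1 hj1k
    have hZcond := condexp_step (ℱ.le j) μ (hXint (j+1) hi1 hj1k) hZm' hDm' hcond' haei l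
    have hZint : Integrable Z μ := by
      refine Integrable.mono' (integrable_const (Real.exp 2)) ?_ ?_
      · apply StronglyMeasurable.aestronglyMeasurable
        apply Measurable.stronglyMeasurable
        have hXm : Measurable (X (j+1)) :=
          ((hXmeas (j+1) hi1 hj1k).measurable).mono (ℱ.le (j+1)) le_rfl
        have hCm2 : Measurable (C (j+1)) := (hZm'.measurable).mono (ℱ.le j) le_rfl
        have hDm2 : Measurable (D (j+1)) := (hDm'.measurable).mono (ℱ.le j) le_rfl
        exact ((hXm.const_mul l).sub (((hDm2.sub hCm2).pow measurable_const).const_mul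
          (l ^ 2 / 8))).exp
      · filter_upwards [haei] with ω ⟨⟨h1, h2⟩, h3, h4, h5⟩
        rw [Real.norm_eq_abs, abs_of_pos (Real.exp_pos _)]
        exact Real.exp_le_exp.2 (exp_arg_le_two h1 h2 h4 h5)
    have hYZint : Integrable (fun ω => Y j ω * Z ω) μ := hfun ▸ hint (j + 1)
    rw [hfun]
    calc μ[fun ω => Y j ω * Z ω|ℱ j] =ᵐ[μ] Y j * μ[Z|ℱ j] :=
        condExp_mul_of_stronglyMeasurable_left (hadp j) hYZint hZint
      _ ≤ᵐ[μ] Y j := by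
        filter_upwards [hZcond] with ω h
        simp only [Pi.mul_apply]
        have hY0 : 0 ≤ Y j ω := (Real.exp_pos _).le
        calc Y j ω * (μ[Z|ℱ j]) ω ≤ Y j ω * 1 := mul_le_mul_of_nonneg_left h hY0
          _ = Y j ω := mul_one _
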